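/- If H is an almost symmetric numerical semigroup with e(H) = m(H) − 1, then H* is almost symmetric with t(H*) ≥ 2. -/

import Mathlib

/-- A numerical semigroup, viewed as a set of integers: a set of nonnegative
integers containing 0, closed under addition, with finite complement in ℕ. -/
def IsNumericalSemigroup (S : Set ℤ) : Prop :=
  (∀ x ∈ S, 0 ≤ x) ∧ 0 ∈ S ∧ (∀ a ∈ S, ∀ b ∈ S, a + b ∈ S) ∧
    {z : ℤ | 0 ≤ z ∧ z ∉ S}.Finite

/-- The genus: the number of nonnegative integers not in `S`. -/
noncomputable def genus (S : Set ℤ) : ℕ := {z : ℤ | 0 ≤ z ∧ z ∉ S}.ncard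

/-- The Frobenius number: the largest integer not in `S`. -/
noncomputable def frob (S : Set ℤ) : ℤ := sSup {z : ℤ | z ∉ S}

/-- The set of pseudo-Frobenius numbers. -/
def PF (S : Set ℤ) : Set ℤ := {x : ℤ | x ∉ S ∧ ∀ h ∈ S, h ≠ 0 → x + h ∈ S}

/-- The type: the number of pseudo-Frobenius numbers. -/
noncomputable def typ (S : Set ℤ) : ℕ := (PF S).ncard

/-- The multiplicity: the smallest nonzero element of `S`. -/
noncomputable def mult (S : Set ℤ) : ℤ := sInf {z : ℤ | z ∈ S ∧ z ≠ 0}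

/-- The Apéry set of `S` with respect to `n`. -/
def apery (S : Set ℤ) (n : ℤ) : Set ℤ := {s ∈ S | s - n ∉ S}

/-- The dual `H* = M - M` of the maximal ideal `M = S \ {0}`. -/
def dual (S : Set ℤ) : Set ℤ :=
  {z : ℤ | ∀ m ∈ S, m ≠ 0 → z + m ∈ S ∧ z + m ≠ 0}

/-- Almost symmetric: `2 g(S) = F(S) + t(S)`. -/
def AlmostSymmetric (S : Set ℤ) : Prop := 2 * (genus S : ℤ) = frob S + (typ S : ℤ)

/-- Symmetric: `2 g(S) = F(S) + 1`. -/
def SymmetricNS (S : Set ℤ) : Prop := 2 * (genus S : ℤ) = frob S + 1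

/-- Pseudo-symmetric: `2 g(S) = F(S) + 2`. -/
def PseudoSymmetric (S : Set ℤ) : Prop := 2 * (genus S : ℤ) = frob S + 2

/-- The set of minimal generators of `S`: nonzero elements not expressible as the
sum of two nonzero elements of `S`. -/
def minGens (S : Set ℤ) : Set ℤ :=
  {x ∈ S | x ≠ 0 ∧ ∀ a ∈ S, ∀ b ∈ S, a ≠ 0 → b ≠ 0 → x ≠ a + b}

/-- The embedding dimension: the number of minimal generators. -/
noncomputable def embdim (S : Set ℤ) : ℕ := (minGens S).ncard

/-- The gluing `⟨x S₁, y S₂⟩` of two numerical semigroups. -/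
def glue (x y : ℤ) (S₁ S₂ : Set ℤ) : Set ℤ :=
  {z : ℤ | ∃ a ∈ S₁, ∃ b ∈ S₂, z = x * a + y * b}

open Set in
lemma counting (T : Set ℤ) (hadd : ∀ a ∈ T, ∀ b ∈ T, a + b ∈ T)
    (L : ℤ) (hL0 : 0 ≤ L) (hLnot : L ∉ T)
    (hLmax : ∀ z, 0 ≤ z → z ∉ T → z ≤ L) :
    2 * ({z : ℤ | 0 ≤ z ∧ z ∉ T}.ncard : ℤ) =
      L + 1 + ({z : ℤ | 0 ≤ z ∧ z ∉ T ∧ L - z ∉ T}.ncard : ℤ) := by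
  classical
  set I : Finset ℤ := Finset.Icc 0 L with hI
  set G : Finset ℤ := I.filter (fun z => z ∉ T) with hG
  set E : Finset ℤ := I.filter (fun z => z ∈ T) with hE
  set H : Finset ℤ := G.filter (fun z => L - z ∉ T) with hH
  set C : Finset ℤ := G.filter (fun z => L - z ∈ T) with hC
  have hGset : {z : ℤ | 0 ≤ z ∧ z ∉ T} = ↑G := by
    ext z
    simp only [mem_setOf_eq, hG, hI, Finset.coe_filter, Finset.mem_Icc, mem_setOf_eq]
    constructor
    · rintro ⟨h1, h2⟩; exact ⟨⟨h1, hLmax z h1 h2⟩, h2⟩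
    · rintro ⟨⟨h1, _⟩, h2⟩; exact ⟨h1, h2⟩
  have hHset : {z : ℤ | 0 ≤ z ∧ z ∉ T ∧ L - z ∉ T} = ↑H := by
    ext z
    simp only [mem_setOf_eq, hH, hG, hI, Finset.coe_filter, Finset.mem_filter,
      Finset.mem_Icc, mem_setOf_eq]
    constructor
    · rintro ⟨h1, h2, h3⟩; exact ⟨⟨⟨h1, hLmax z h1 h2⟩, h2⟩, h3⟩
    · rintro ⟨⟨⟨h1, _⟩, h2⟩, h3⟩; exact ⟨h1, h2, h3⟩
  have hCE : C.card = E.card := by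
    apply Finset.card_nbij' (fun z => L - z) (fun z => L - z)
    · intro z hz
      simp only [Finset.mem_coe, hC, hG, hI, Finset.mem_filter, Finset.mem_Icc] at hz
      simp only [Finset.mem_coe, hE, hI, Finset.mem_filter, Finset.mem_Icc]
      exact ⟨⟨by omega, by omega⟩, hz.2⟩
    · intro z hz
      simp only [Finset.mem_coe, hE, hI, Finset.mem_filter, Finset.mem_Icc] at hz
      simp only [Finset.mem_coe, hC, hG, hI, Finset.mem_filter, Finset.mem_Icc]
      have hLz : L - z ∉ T := by
        intro hmem
        exact hLnot (by simpa using hadd z hz.2 (L - z) hmem)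
      refine ⟨⟨⟨by omega, by omega⟩, hLz⟩, by simpa using hz.2⟩
    · intro z _; ring
    · intro z _; ring
  have hGHC : G.card = H.card + C.card := by
    have h2 := Finset.card_filter_add_card_filter_not (s := G)
      (p := fun z => L - z ∉ T)
    simp only [not_not] at h2
    rw [hH, hC]
    omega
  have hIE : G.card + E.card = I.card := by
    have h2 := Finset.card_filter_add_card_filter_not (s := I)
      (p := fun z => z ∉ T)
    simp only [not_not] at h2
    rw [hG, hE]
    omega
  have hIcard : (I.card : ℤ) = L + 1 := by
    rw [hI, Int.card_Icc]
    omega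
  rw [hGset, hHset, Set.ncard_coe_finset, Set.ncard_coe_finset]
  have := hCE
  have := hGHC
  have := hIE
  omega

theorem stmt14 (S : Set ℤ) (hS : IsNumericalSemigroup S)
    (halm : AlmostSymmetric S) (he : (embdim S : ℤ) = mult S - 1) :
    AlmostSymmetric (dual S) ∧ 2 ≤ typ (dual S) := by
  classical
  obtain ⟨hnn, h0, hadd, hfin⟩ := hS
  -- the multiplicity
  set m : ℤ := mult S with hmdef
  have hSne : {z : ℤ | z ∈ S ∧ z ≠ 0}.Nonempty := by
    by_contra h
    rw [Set.not_nonempty_iff_eq_empty] at h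
    have hsub : Set.Ici (1 : ℤ) ⊆ {z : ℤ | 0 ≤ z ∧ z ∉ S} := by
      intro z hz
      simp only [Set.mem_Ici] at hz
      refine ⟨by omega, fun hzS => ?_⟩
      have : z ∈ ({} : Set ℤ) := h ▸ (⟨hzS, by omega⟩ : z ∈ {z : ℤ | z ∈ S ∧ z ≠ 0})
      exact this
    exact Set.Ici_infinite 1 (hfin.subset hsub)
  have hmS : m ∈ S ∧ m ≠ 0 := by
    have := Int.csInf_mem hSne (⟨0, fun z hz => hz.1 |> hnn z⟩)
    exact this
  have hmmin : ∀ z ∈ S, z ≠ 0 → m ≤ z := fun z hz hz0 =>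
    csInf_le ⟨0, fun w hw => hnn w hw.1⟩ ⟨hz, hz0⟩
  have hm1 : 1 ≤ m := by
    rcases hmS with ⟨h1, h2⟩; have := hnn m h1; omega
  -- m ≥ 2
  have hm2 : 2 ≤ m := by
    by_contra h
    have hmeq : m = 1 := by omega
    have h1S : (1 : ℤ) ∈ S := hmeq ▸ hmS.1
    have hall : ∀ n : ℤ, 0 ≤ n → n ∈ S := by
      intro n hn
      refine Int.le_induction (motive := fun n _ => n ∈ S) ?_ ?_ n hn
      · exact h0
      · exact fun k _ ih => hadd k ih 1 h1S
    have hmg : minGens S = {1} := by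
      ext x
      simp only [minGens, Set.mem_setOf_eq, Set.mem_singleton_iff]
      constructor
      · rintro ⟨hxS, hx0, hxind⟩
        have hx1 : 1 ≤ x := by have := hnn x hxS; omega
        by_contra hx
        exact hxind 1 h1S (x - 1) (hall _ (by omega)) one_ne_zero (by omega) (by ring)
      · rintro rfl
        refine ⟨h1S, one_ne_zero, fun a ha b hb ha0 hb0 => ?_⟩
        have := hnn a ha; have := hnn b hb; omega
    have : embdim S = 1 := by rw [embdim, hmg, Set.ncard_singleton]
    rw [this] at he
    omega
  -- the Frobenius number
  have hGne : {z : ℤ | 0 ≤ z ∧ z ∉ S}.Nonempty := by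
    refine ⟨1, by norm_num, fun h => ?_⟩
    have := hmmin 1 h (by norm_num); omega
  obtain ⟨F, hFgap, hFmax'⟩ : ∃ F ∈ {z : ℤ | 0 ≤ z ∧ z ∉ S},
      ∀ z ∈ {z : ℤ | 0 ≤ z ∧ z ∉ S}, z ≤ F := by
    have hne : hfin.toFinset.Nonempty := by rwa [Set.Finite.toFinset_nonempty]
    refine ⟨hfin.toFinset.max' hne, ?_, ?_⟩
    · have := hfin.toFinset.max'_mem hne
      rwa [Set.Finite.mem_toFinset] at this
    · intro z hz
      exact hfin.toFinset.le_max' z (by rwa [Set.Finite.mem_toFinset])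
  have hFmax : ∀ z, 0 ≤ z → z ∉ S → z ≤ F := fun z h1 h2 => hFmax' z ⟨h1, h2⟩
  have hFS : ∀ z, F < z → z ∈ S := by
    intro z hz
    by_contra h
    have h0z : 0 ≤ z := le_trans hFgap.1 (le_of_lt hz)
    have := hFmax z h0z h
    omega
  have hfrob : frob S = F := by
    refine IsGreatest.csSup_eq ⟨hFgap.2, fun z hz => ?_⟩
    by_contra h
    exact hz (hFS z (by omega))
  have hnotS_le : ∀ z, z ∉ S → z ≤ F := by
    intro z hz; by_contra h; exact hz (hFS z (by omega))
  -- F ≥ m + 1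
  have hFm : m + 1 ≤ F := by
    have hm1S : m - 1 ∉ S := by
      intro h
      have := hmmin (m - 1) h (by omega); omega
    have hFge : m - 1 ≤ F := hFmax (m - 1) (by omega) hm1S
    have hFne : F ≠ m := fun h => hFgap.2 (h ▸ hmS.1)
    rcases eq_or_lt_of_le hFge with heq | hlt
    · exfalso
      have hSeq : ∀ z : ℤ, z ∈ S ↔ (z = 0 ∨ m ≤ z) := by
        intro z
        constructor
        · intro hz
          by_cases h : z = 0
          · exact Or.inl h
          · exact Or.inr (hmmin z hz h)
        · rintro (rfl | hz)
          · exact h0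
          · exact hFS z (by omega)
      have hmg : minGens S = Set.Icc m (2 * m - 1) := by
        ext x
        simp only [minGens, Set.mem_setOf_eq, Set.mem_Icc]
        constructor
        · rintro ⟨hxS, hx0, hxind⟩
          have hxm : m ≤ x := hmmin x hxS hx0
          refine ⟨hxm, ?_⟩
          by_contra hx
          exact hxind m hmS.1 (x - m) ((hSeq (x - m)).2 (Or.inr (by omega)))
            hmS.2 (by omega) (by ring)
        · rintro ⟨hx1, hx2⟩
          refine ⟨(hSeq x).2 (Or.inr hx1), by omega, fun a ha b hb ha0 hb0 => ?_⟩
          have := hmmin a ha ha0; have := hmmin b hb hb0; omega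
      have hcard : embdim S = m.toNat := by
        rw [embdim, hmg, ← Finset.coe_Icc, Set.ncard_coe_finset, Int.card_Icc]
        omega
      rw [hcard] at he
      omega
    · omega
  -- PF basics
  have hPFnn : ∀ f ∈ PF S, 0 ≤ f := by
    rintro f ⟨hf1, hf2⟩
    by_contra hneg
    push_neg at hneg
    have hfm : f + m ∈ S := hf2 m hmS.1 hmS.2
    by_cases hz : f + m = 0
    · have hFmS : F + m ∈ S := hFS _ (by omega)
      have := hf2 (F + m) hFmS (by omega)
      have heq : f + (F + m) = F := by omega
      rw [heq] at this
      exact hFgap.2 this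
    · have := hmmin (f + m) hfm hz; omega
  have hFPF : F ∈ PF S := by
    refine ⟨hFgap.2, fun h hh hh0 => hFS _ ?_⟩
    have := hnn h hh; have := hmmin h hh hh0; omega
  have hPFfin : (PF S).Finite := by
    refine hfin.subset fun f hf => ⟨hPFnn f hf, hf.1⟩
  have hPFsub : PF S ⊆ {z : ℤ | 0 ≤ z ∧ z ∉ S} := fun f hf => ⟨hPFnn f hf, hf.1⟩
  -- the key "almost symmetric" property
  have htpos : 1 ≤ typ S := (Set.ncard_pos hPFfin).2 ⟨F, hFPF⟩
  have hAS : ∀ x, 0 ≤ x → x ∉ S → F - x ∉ S → x ∈ PF S := by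
    have hcount := counting S hadd F hFgap.1 hFgap.2 hFmax
    have hsub : PF S \ {F} ⊆ {z : ℤ | 0 ≤ z ∧ z ∉ S ∧ F - z ∉ S} := by
      rintro f ⟨hf, hfF⟩
      simp only [Set.mem_singleton_iff] at hfF
      refine ⟨hPFnn f hf, hf.1, fun h => ?_⟩
      have := hf.2 (F - f) h (by omega)
      rw [show f + (F - f) = F by ring] at this
      exact hFgap.2 this
    have hdscard : (PF S \ {F}).ncard = typ S - 1 :=
      Set.ncard_diff_singleton_of_mem hFPF
    have hholfin : {z : ℤ | 0 ≤ z ∧ z ∉ S ∧ F - z ∉ S}.Finite :=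
      hfin.subset fun z hz => ⟨hz.1, hz.2.1⟩
    have halm' : 2 * (genus S : ℤ) = F + (typ S : ℤ) := by rw [← hfrob]; exact halm
    have hgen : (genus S : ℤ) = ({z : ℤ | 0 ≤ z ∧ z ∉ S}.ncard : ℤ) := rfl
    have hhcard : ({z : ℤ | 0 ≤ z ∧ z ∉ S ∧ F - z ∉ S}.ncard : ℤ) = (typ S : ℤ) - 1 := by
      omega
    have heqset : PF S \ {F} = {z : ℤ | 0 ≤ z ∧ z ∉ S ∧ F - z ∉ S} := by
      apply Set.eq_of_subset_of_ncard_le hsub _ hholfin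
      omega
    intro x h1 h2 h3
    by_cases hxF : x = F
    · exact hxF ▸ hFPF
    · have : x ∈ PF S \ {F} := heqset ▸ (⟨h1, h2, h3⟩ :
        x ∈ {z : ℤ | 0 ≤ z ∧ z ∉ S ∧ F - z ∉ S})
      exact this.1
  have hAS' : ∀ x, 0 ≤ x → x ∉ S → x ∉ PF S → F - x ∈ S := by
    intro x h1 h2 h3
    by_contra h
    exact h3 (hAS x h1 h2 h)
  -- the star property
  have hkey : (∀ w ∈ S, w - m ∉ S → ∀ a ∈ S, ∀ b ∈ S, a ≠ 0 → b ≠ 0 → a + b = w →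
      w = F + m) ∧ (typ S : ℤ) ≤ m - 2 := by
    have hdvdS : ∀ c : ℤ, 0 ≤ c → m ∣ c → ∀ a ∈ S, a + c ∈ S := by
      rintro c hc ⟨k, rfl⟩ a ha
      have hk : 0 ≤ k := by
        by_contra hkneg
        push_neg at hkneg
        have : m * k < 0 := mul_neg_of_pos_of_neg (by omega) hkneg
        omega
      have hind : ∀ n : ℤ, 0 ≤ n → a + m * n ∈ S := by
        intro n hn
        refine Int.le_induction (motive := fun n _ => a + m * n ∈ S) ?_ ?_ n hn
        · simpa using ha
        · intro j _ ih
          have := hadd _ ih m hmS.1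
          rw [show a + m * j + m = a + m * (j + 1) by ring] at this
          exact this
      exact hind k hk
    have hApIcc : {s ∈ S | s - m ∉ S} ⊆ Set.Icc 0 (F + m) := by
      rintro w ⟨hw1, hw2⟩
      exact ⟨hnn w hw1, by have := hnotS_le _ hw2; omega⟩
    have hApfin : {s ∈ S | s - m ∉ S}.Finite := (Set.finite_Icc _ _).subset hApIcc
    have hmene : m ≠ 0 := by omega
    have hbij : Set.BijOn (fun z => z % m) {s ∈ S | s - m ∉ S} (Set.Ico 0 m) := by
      refine ⟨?_, ?_, ?_⟩
      · rintro w _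
        exact ⟨Int.emod_nonneg w hmene, Int.emod_lt_of_pos w (by omega)⟩
      · rintro a ha b hb heq
        simp only at heq
        have hd : (m : ℤ) ∣ a - b := by
          rw [Int.emod_eq_emod_iff_emod_sub_eq_zero] at heq
          exact Int.dvd_of_emod_eq_zero heq
        rcases lt_trichotomy a b with hab | hab | hab
        · exfalso
          have hd' : m ∣ b - a := by
            rw [show b - a = -(a - b) by ring]
            exact dvd_neg.mpr hd
          have hge : m ≤ b - a := Int.le_of_dvd (by omega) hd'
          have : b - m ∈ S := by
            have := hdvdS (b - a - m) (by omega) (dvd_sub hd' dvd_rfl) a ha.1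
            rw [show a + (b - a - m) = b - m by ring] at this
            exact this
          exact hb.2 this
        · exact hab
        · exfalso
          have hge : m ≤ a - b := Int.le_of_dvd (by omega) hd
          have : a - m ∈ S := by
            have := hdvdS (a - b - m) (by omega) (dvd_sub hd dvd_rfl) b hb.1
            rw [show b + (a - b - m) = a - m by ring] at this
            exact this
          exact ha.2 this
      · intro r hr
        simp only [Set.mem_Ico] at hr
        have hz0 : r + m * (F + 1) ∈ S := by
          apply hFS
          have h1 : (F + 1) ≤ m * (F + 1) := le_mul_of_one_le_left (by omega) hm1
          omega
        obtain ⟨lb, ⟨hlbS, hlbr⟩, hlbmin⟩ :=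
          Int.exists_least_of_bdd (P := fun z => z ∈ S ∧ z % m = r)
            ⟨0, fun z hz => hnn z hz.1⟩
            ⟨r + m * (F + 1), hz0, by
              rw [Int.add_mul_emod_self_left, Int.emod_eq_of_lt hr.1 hr.2]⟩
        refine ⟨lb, ⟨hlbS, fun h => ?_⟩, hlbr⟩
        have hmod : (lb - m) % m = r := by
          rw [Int.sub_emod, Int.emod_self, sub_zero, Int.emod_emod_of_dvd lb dvd_rfl, hlbr]
        have := hlbmin (lb - m) ⟨h, hmod⟩
        omega
    have hApcard : {s ∈ S | s - m ∉ S}.ncard = m.toNat := by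
      have h1 : (fun z => z % m) '' {s ∈ S | s - m ∉ S} = Set.Ico 0 m := hbij.image_eq
      have h2 : ((fun z => z % m) '' {s ∈ S | s - m ∉ S}).ncard =
          {s ∈ S | s - m ∉ S}.ncard := Set.ncard_image_of_injOn hbij.injOn
      rw [h1, ← Finset.coe_Ico, Set.ncard_coe_finset, Int.card_Ico] at h2
      omega
    have h0Ap : (0 : ℤ) ∈ {s ∈ S | s - m ∉ S} := ⟨h0, fun h => by have := hnn _ h; omega⟩
    have hApNfin : ({s ∈ S | s - m ∉ S} \ {0}).Finite := hApfin.diff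
    have hApNcard : ({s ∈ S | s - m ∉ S} \ {0}).ncard = m.toNat - 1 := by
      rw [Set.ncard_diff_singleton_of_mem h0Ap, hApcard]
    have hDecsub : {w ∈ {s ∈ S | s - m ∉ S} \ {0} |
        ∃ a ∈ S, ∃ b ∈ S, a ≠ 0 ∧ b ≠ 0 ∧ a + b = w} ⊆ {s ∈ S | s - m ∉ S} \ {0} :=
      fun w hw => hw.1
    have hDecfin := hApNfin.subset hDecsub
    have hIndecfin : (({s ∈ S | s - m ∉ S} \ {0}) \ {w ∈ {s ∈ S | s - m ∉ S} \ {0} |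
        ∃ a ∈ S, ∃ b ∈ S, a ≠ 0 ∧ b ≠ 0 ∧ a + b = w}).Finite := hApNfin.diff
    have hmg : minGens S = insert m (({s ∈ S | s - m ∉ S} \ {0}) \
        {w ∈ {s ∈ S | s - m ∉ S} \ {0} | ∃ a ∈ S, ∃ b ∈ S, a ≠ 0 ∧ b ≠ 0 ∧ a + b = w}) := by
      ext x
      simp only [minGens, Set.mem_setOf_eq, Set.mem_insert_iff, Set.mem_diff,
        Set.mem_singleton_iff]
      constructor
      · rintro ⟨hxS, hx0, hxind⟩
        by_cases hxm : x = m
        · exact Or.inl hxm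
        · right
          have hxAp : x ∈ S ∧ x - m ∉ S := by
            refine ⟨hxS, fun h => ?_⟩
            by_cases h' : x - m = 0
            · exact hxm (by omega)
            · exact hxind m hmS.1 (x - m) h hmS.2 h' (by ring)
          refine ⟨⟨hxAp, hx0⟩, ?_⟩
          rintro ⟨-, a, ha, b, hb, ha0, hb0, hab⟩
          exact hxind a ha b hb ha0 hb0 hab.symm
      · rintro (rfl | ⟨⟨⟨hxS, hxm⟩, hx0⟩, hxdec⟩)
        · refine ⟨hmS.1, hmS.2, fun a ha b hb ha0 hb0 heq => ?_⟩
          have := hmmin a ha ha0; have := hmmin b hb hb0; omega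
        · refine ⟨hxS, hx0, fun a ha b hb ha0 hb0 heq => ?_⟩
          exact hxdec ⟨⟨⟨hxS, hxm⟩, hx0⟩, a, ha, b, hb, ha0, hb0, heq.symm⟩
    have hmnot : m ∉ (({s ∈ S | s - m ∉ S} \ {0}) \ {w ∈ {s ∈ S | s - m ∉ S} \ {0} |
        ∃ a ∈ S, ∃ b ∈ S, a ≠ 0 ∧ b ≠ 0 ∧ a + b = w}) := by
      rintro ⟨⟨⟨-, hmm⟩, -⟩, -⟩
      rw [sub_self] at hmm
      exact hmm h0
    have hembd : embdim S = (({s ∈ S | s - m ∉ S} \ {0}) \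
        {w ∈ {s ∈ S | s - m ∉ S} \ {0} |
          ∃ a ∈ S, ∃ b ∈ S, a ≠ 0 ∧ b ≠ 0 ∧ a + b = w}).ncard + 1 := by
      rw [embdim, hmg, Set.ncard_insert_of_notMem hmnot hIndecfin]
    have hIndec2 := Set.ncard_diff hDecsub hDecfin
    have hDecleq := Set.ncard_le_ncard hDecsub hApNfin
    have hDec1 : {w ∈ {s ∈ S | s - m ∉ S} \ {0} |
        ∃ a ∈ S, ∃ b ∈ S, a ≠ 0 ∧ b ≠ 0 ∧ a + b = w}.ncard = 1 := by
      rw [hembd] at he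
      push_cast at he
      omega
    have hPFApsub : (fun f => f + m) '' PF S ⊆ {s ∈ S | s - m ∉ S} \ {0} := by
      rintro w ⟨f, hf, rfl⟩
      have hfm : f + m ∈ S := hf.2 m hmS.1 hmS.2
      refine ⟨⟨hfm, by rw [add_sub_cancel_right]; exact hf.1⟩, ?_⟩
      have := hPFnn f hf
      simp only [Set.mem_singleton_iff]
      omega
    have hPFApcard : ((fun f => f + m) '' PF S).ncard = typ S :=
      Set.ncard_image_of_injective _ (add_left_injective m)
    have hPFApfin : ((fun f => f + m) '' PF S).Finite := hApNfin.subset hPFApsub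
    have ht1 : typ S ≤ m.toNat - 1 := by
      have := Set.ncard_le_ncard hPFApsub hApNfin
      omega
    have htne : typ S ≠ m.toNat - 1 := by
      intro hteq
      have heqset : (fun f => f + m) '' PF S = {s ∈ S | s - m ∉ S} \ {0} :=
        Set.eq_of_subset_of_ncard_le hPFApsub (by omega) hApNfin
      have hDecne : {w ∈ {s ∈ S | s - m ∉ S} \ {0} |
          ∃ a ∈ S, ∃ b ∈ S, a ≠ 0 ∧ b ≠ 0 ∧ a + b = w}.Nonempty := by
        rw [← Set.ncard_pos hDecfin] at *
        omega
      obtain ⟨w, ⟨⟨hwS, hwm⟩, -⟩, a, ha, b, hb, ha0, hb0, hab⟩ := hDecne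
      have haAp : a ∈ {s ∈ S | s - m ∉ S} \ {0} := by
        refine ⟨⟨ha, fun h' => ?_⟩, by simpa using ha0⟩
        apply hwm
        by_cases hz : a - m = 0
        · rw [← hab, show a + b - m = (a - m) + b by ring, hz, zero_add]; exact hb
        · rw [← hab, show a + b - m = (a - m) + b by ring]
          exact hadd _ h' b hb
      rw [← heqset] at haAp
      obtain ⟨f, hf, hfa⟩ := haAp
      apply hwm
      rw [← hab, show a + b - m = (a - m) + b by ring, ← hfa, add_sub_cancel_right]
      exact hf.2 b hb hb0
    have hw0ex : ∃ w₀ ∈ {s ∈ S | s - m ∉ S} \ {0}, w₀ ∉ (fun f => f + m) '' PF S := by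
      by_contra hcon
      push_neg at hcon
      have := Set.ncard_le_ncard hcon hPFApfin
      omega
    obtain ⟨w₀, hw₀, hw₀PF⟩ := hw0ex
    have hFmemS : F + m ∈ S := hFS _ (by omega)
    have hFmApN : F + m ∈ {s ∈ S | s - m ∉ S} \ {0} := by
      refine ⟨⟨hFmemS, by rw [add_sub_cancel_right]; exact hFgap.2⟩, ?_⟩
      simp only [Set.mem_singleton_iff]
      omega
    have hw₀S : w₀ ∈ S := hw₀.1.1
    have hw₀0 : w₀ ≠ 0 := by simpa using hw₀.2
    have hw₀m : m ≤ w₀ := hmmin w₀ hw₀S hw₀0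
    have hw₀mm : w₀ - m ∉ S := hw₀.1.2
    have hw₀PF' : w₀ - m ∉ PF S := fun h => hw₀PF ⟨w₀ - m, h, by simp⟩
    have hcS : F - (w₀ - m) ∈ S := hAS' (w₀ - m) (by omega) hw₀mm hw₀PF'
    have hcne : F - (w₀ - m) ≠ 0 := by
      intro h
      exact hw₀PF' (by rw [show w₀ - m = F by omega]; exact hFPF)
    have hFmDec : F + m ∈ {w ∈ {s ∈ S | s - m ∉ S} \ {0} |
        ∃ a ∈ S, ∃ b ∈ S, a ≠ 0 ∧ b ≠ 0 ∧ a + b = w} :=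
      ⟨hFmApN, w₀, hw₀S, F - (w₀ - m), hcS, hw₀0, hcne, by ring⟩
    obtain ⟨u, hu⟩ := Set.ncard_eq_one.mp hDec1
    have huF : F + m = u := by
      have := hu ▸ hFmDec
      simpa using this
    refine ⟨?_, by omega⟩
    intro w hwS hwm a ha b hb ha0 hb0 hab
    have hw0 : w ≠ 0 := by
      have := hmmin a ha ha0; have := hmmin b hb hb0; omega
    have : w ∈ {w ∈ {s ∈ S | s - m ∉ S} \ {0} |
        ∃ a ∈ S, ∃ b ∈ S, a ≠ 0 ∧ b ≠ 0 ∧ a + b = w} :=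
      ⟨⟨⟨hwS, hwm⟩, by simpa using hw0⟩, a, ha, b, hb, ha0, hb0, hab⟩
    rw [hu] at this
    simp only [Set.mem_singleton_iff] at this
    omega
  have hstar := hkey.1
  have htm' := hkey.2
  -- D = S ∪ PF S
  set D : Set ℤ := dual S with hDdef
  have hDeq : D = S ∪ PF S := by
    ext z
    constructor
    · intro hz
      by_cases hzS : z ∈ S
      · exact Or.inl hzS
      · exact Or.inr ⟨hzS, fun h hh hh0 => (hz h hh hh0).1⟩
    · rintro (hz | hz) h hh hh0
      · have h1 := hnn h hh
        have h2 := hnn z hz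
        exact ⟨hadd z hz h hh, by have := hmmin h hh hh0; omega⟩
      · refine ⟨hz.2 h hh hh0, ?_⟩
        have := hPFnn z hz
        have := hmmin h hh hh0
        omega
  have hDnn : ∀ z ∈ D, 0 ≤ z := by
    rw [hDeq]; rintro z (hz | hz); exacts [hnn z hz, hPFnn z hz]
  have h0D : 0 ∈ D := by rw [hDeq]; exact Or.inl h0
  have hDadd : ∀ a ∈ D, ∀ b ∈ D, a + b ∈ D := by
    intro a ha b hb h hh hh0
    have h1 := hb h hh hh0
    have h2 := ha (b + h) h1.1 h1.2
    rw [show a + (b + h) = a + b + h by ring] at h2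
    exact h2
  -- Frobenius number of D
  have hFDnot : F - m ∉ D := by
    rw [hDeq]
    rintro (h | h)
    · have := hadd (F - m) h m hmS.1
      rw [show F - m + m = F by ring] at this
      exact hFgap.2 this
    · have := h.2 m hmS.1 hmS.2
      rw [show F - m + m = F by ring] at this
      exact hFgap.2 this
  have hFDmem : ∀ z, F - m < z → z ∈ D := by
    intro z hz
    rw [hDeq]
    by_cases hzS : z ∈ S
    · exact Or.inl hzS
    · right
      by_cases hzF : z = F
      · exact hzF ▸ hFPF
      · refine hAS z (by omega) hzS fun h => ?_
        have h1 := hnn (F - z) h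
        have h2 : F - z ≠ 0 := by omega
        have := hmmin (F - z) h h2
        omega
  have hfrobD : frob D = F - m := by
    refine IsGreatest.csSup_eq ⟨hFDnot, fun z hz => ?_⟩
    by_contra h
    exact hz (hFDmem z (by omega))
  -- holes of D are pseudo-Frobenius of D
  have hholesD : ∀ x, 0 ≤ x → x ∉ D → F - m - x ∉ D → x ∈ PF D := by
    intro x hx0 hxD hyD
    have hxS : x ∉ S := fun h => hxD (hDeq ▸ Or.inl h)
    have hxPF : x ∉ PF S := fun h => hxD (hDeq ▸ Or.inr h)
    have hxm : x + m ∈ S := by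
      by_cases hc : F - m - x < 0
      · exact hFS _ (by omega)
      · have hyS : F - m - x ∉ S := fun h => hyD (hDeq ▸ Or.inl h)
        have hyPF : F - m - x ∉ PF S := fun h => hyD (hDeq ▸ Or.inr h)
        have := hAS' (F - m - x) (by omega) hyS hyPF
        rw [show F - (F - m - x) = x + m by ring] at this
        exact this
    refine ⟨hxD, fun b hb hb0 => ?_⟩
    rw [hDeq] at hb ⊢
    rcases hb with hbS | hbPF
    · by_cases hxb : x + b ∈ S
      · exact Or.inl hxb
      · right
        have hsum : (x + m) + b ∈ S := hadd _ hxm b hbS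
        have hsub : (x + m) + b - m ∉ S := by
          rw [show x + m + b - m = x + b by ring]; exact hxb
        have := hstar _ hsum hsub (x + m) hxm b hbS (by have := hnn b hbS; omega) hb0 rfl
        have hxbF : x + b = F := by omega
        exact hxbF ▸ hFPF
    · by_cases hxb : x + b ∈ S
      · exact Or.inl hxb
      · right
        refine ⟨hxb, fun h hh hh0 => ?_⟩
        by_cases hxh : x + h ∈ S
        · have := hbPF.2 (x + h) hxh (by have := hnn h hh; have := hmmin h hh hh0; omega)
          rw [show b + (x + h) = x + b + h by ring] at this
          exact this
        · have hsum : (x + m) + h ∈ S := hadd _ hxm h hh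
          have hsub : (x + m) + h - m ∉ S := by
            rw [show x + m + h - m = x + h by ring]; exact hxh
          have := hstar _ hsum hsub (x + m) hxm h hh (by omega) hh0 rfl
          have hxbh : x + b + h = F + b := by omega
          rw [hxbh]
          have hb1 : 1 ≤ b := by
            have := hPFnn b hbPF
            rcases eq_or_lt_of_le this with h' | h'
            · exfalso; exact hbPF.1 (h' ▸ h0)
            · omega
          exact hFS _ (by omega)
  -- PF D = insert (F-m) holesD
  have hPFD : PF D = insert (F - m) {z : ℤ | 0 ≤ z ∧ z ∉ D ∧ F - m - z ∉ D} := by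
    ext f
    constructor
    · rintro ⟨hfD, hfall⟩
      have hf0 : 0 ≤ f := by
        by_contra hneg
        push_neg at hneg
        have hmem : F - m - f ∈ D := hFDmem _ (by omega)
        have hne : F - m - f ≠ 0 := by omega
        have := hfall (F - m - f) hmem hne
        rw [show f + (F - m - f) = F - m by ring] at this
        exact hFDnot this
      by_cases hfF : f = F - m
      · exact hfF ▸ Set.mem_insert _ _
      · refine Set.mem_insert_of_mem _ ⟨hf0, hfD, fun h => ?_⟩
        have hne : F - m - f ≠ 0 := by omega
        have := hfall (F - m - f) h hne
        rw [show f + (F - m - f) = F - m by ring] at this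
        exact hFDnot this
    · rintro (rfl | hf)
      · exact ⟨hFDnot, fun h hh hh0 => hFDmem _ (by have := hDnn h hh; omega)⟩
      · exact hholesD f hf.1 hf.2.1 hf.2.2
  -- finiteness facts
  have hDfin : {z : ℤ | 0 ≤ z ∧ z ∉ D}.Finite := by
    refine hfin.subset fun z hz => ⟨hz.1, fun h => hz.2 (by rw [hDeq]; exact Or.inl h)⟩
  have hholesfin : {z : ℤ | 0 ≤ z ∧ z ∉ D ∧ F - m - z ∉ D}.Finite := by
    refine hDfin.subset fun z hz => ⟨hz.1, hz.2.1⟩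
  -- counting for D
  have hcountD := counting D hDadd (F - m) (by omega) hFDnot
    (fun z h1 h2 => by by_contra h; exact h2 (hFDmem z (by omega)))
  -- typ D = #holesD + 1
  have htypD : (typ D : ℤ) = ({z : ℤ | 0 ≤ z ∧ z ∉ D ∧ F - m - z ∉ D}.ncard : ℤ) + 1 := by
    have hnotmem : F - m ∉ {z : ℤ | 0 ≤ z ∧ z ∉ D ∧ F - m - z ∉ D} := by
      intro h
      have := h.2.2
      rw [sub_self] at this
      exact this h0D
    have : typ D = (PF D).ncard := rfl
    rw [this, hPFD, Set.ncard_insert_of_notMem hnotmem hholesfin]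
    push_cast
    ring
  -- genus D = genus S - typ S
  have hgenusD : (genus D : ℤ) = (genus S : ℤ) - (typ S : ℤ) := by
    have hset : {z : ℤ | 0 ≤ z ∧ z ∉ D} = {z : ℤ | 0 ≤ z ∧ z ∉ S} \ PF S := by
      ext z
      simp only [Set.mem_setOf_eq, Set.mem_diff, hDeq, Set.mem_union]
      constructor
      · rintro ⟨h1, h2⟩
        push_neg at h2
        exact ⟨⟨h1, h2.1⟩, h2.2⟩
      · rintro ⟨⟨h1, h2⟩, h3⟩
        exact ⟨h1, fun h => h.elim h2 h3⟩
    have hle : typ S ≤ genus S := Set.ncard_le_ncard hPFsub hfin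
    have : genus D = genus S - typ S := by
      show {z : ℤ | 0 ≤ z ∧ z ∉ D}.ncard = _
      rw [hset, Set.ncard_diff hPFsub hPFfin]
      rfl
    rw [this]
    push_cast [hle]
    ring
  -- t ≤ m - 2
  have htm : (typ S : ℤ) ≤ m - 2 := htm'
  have halm' : 2 * (genus S : ℤ) = F + (typ S : ℤ) := by rw [← hfrob]; exact halm
  constructor
  · show 2 * (genus D : ℤ) = frob D + (typ D : ℤ)
    rw [hfrobD, htypD]
    have : (genus D : ℤ) = ({z : ℤ | 0 ≤ z ∧ z ∉ D}.ncard : ℤ) := rfl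
    omega
  · have h1 : (1 : ℤ) ≤ ({z : ℤ | 0 ≤ z ∧ z ∉ D ∧ F - m - z ∉ D}.ncard : ℤ) := by
      have : (genus D : ℤ) = ({z : ℤ | 0 ≤ z ∧ z ∉ D}.ncard : ℤ) := rfl
      omega
    omega
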